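/- Let G : C ⥤ D and F : D ⥤ C be functors with an ambiadjunction F ⊣ G ⊣ F, i.e., adjunctions F ⊣ G (unit η₁ : 𝟭_D ⟶ GF, counit ε₁ : FG ⟶ 𝟭_C) and G ⊣ F (unit η₂ : 𝟭_C ⟶ FG, counit ε₂ : GF ⟶ 𝟭_D). Then the functor Φ : (D ⥤ D) ⥤ (C ⥤ C), Φ(X) = F ∘ X ∘ G, equipped with the lax structure lax₀ = η₂, lax_{X,Y} = F ∗ X ∗ ε₂ ∗ Y ∗ G and the oplax structure oplax₀ = ε₁, oplax_{X,Y} = F ∗ X ∗ η₁ ∗ Y ∗ G, is a Frobenius monoidal functor between the endofunctor categories (with composition as tensor product). -/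

import Mathlib

open CategoryTheory MonoidalCategory

universe v₁ v₂ v₃ u₁ u₂ u₃

/-- The data of a functor equipped with both a lax and an oplax monoidal structure. -/
structure FrobData (D : Type u₁) [Category.{v₁} D] [MonoidalCategory D]
    (C : Type u₂) [Category.{v₂} C] [MonoidalCategory C] where
  F : D ⥤ C
  lax : ∀ X Y : D, F.obj X ⊗ F.obj Y ⟶ F.obj (X ⊗ Y)
  lax₀ : 𝟙_ C ⟶ F.obj (𝟙_ D)
  oplax : ∀ X Y : D, F.obj (X ⊗ Y) ⟶ F.obj X ⊗ F.obj Y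
  oplax₀ : F.obj (𝟙_ D) ⟶ 𝟙_ C

variable {D : Type u₁} [Category.{v₁} D] [MonoidalCategory D]
variable {C : Type u₂} [Category.{v₂} C] [MonoidalCategory C]

/-- The axioms of a lax monoidal structure. -/
def FrobData.IsLax (d : FrobData D C) : Prop :=
  (∀ {X Y X' Y' : D} (f : X ⟶ X') (g : Y ⟶ Y'),
    (d.F.map f ⊗ₘ d.F.map g) ≫ d.lax X' Y' = d.lax X Y ≫ d.F.map (f ⊗ₘ g)) ∧
  (∀ X Y Z : D,
    (d.lax X Y ▷ d.F.obj Z) ≫ d.lax (X ⊗ Y) Z ≫ d.F.map (α_ X Y Z).hom =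
      (α_ (d.F.obj X) (d.F.obj Y) (d.F.obj Z)).hom ≫ (d.F.obj X ◁ d.lax Y Z) ≫
        d.lax X (Y ⊗ Z)) ∧
  (∀ X : D,
    (d.lax₀ ▷ d.F.obj X) ≫ d.lax (𝟙_ D) X ≫ d.F.map (λ_ X).hom = (λ_ (d.F.obj X)).hom) ∧
  (∀ X : D,
    (d.F.obj X ◁ d.lax₀) ≫ d.lax X (𝟙_ D) ≫ d.F.map (ρ_ X).hom = (ρ_ (d.F.obj X)).hom)

/-- The axioms of an oplax monoidal structure. -/
def FrobData.IsOplax (d : FrobData D C) : Prop :=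
  (∀ {X Y X' Y' : D} (f : X ⟶ X') (g : Y ⟶ Y'),
    d.F.map (f ⊗ₘ g) ≫ d.oplax X' Y' = d.oplax X Y ≫ (d.F.map f ⊗ₘ d.F.map g)) ∧
  (∀ X Y Z : D,
    d.oplax (X ⊗ Y) Z ≫ (d.oplax X Y ▷ d.F.obj Z) ≫
        (α_ (d.F.obj X) (d.F.obj Y) (d.F.obj Z)).hom =
      d.F.map (α_ X Y Z).hom ≫ d.oplax X (Y ⊗ Z) ≫ (d.F.obj X ◁ d.oplax Y Z)) ∧
  (∀ X : D,
    d.oplax (𝟙_ D) X ≫ (d.oplax₀ ▷ d.F.obj X) ≫ (λ_ (d.F.obj X)).hom = d.F.map (λ_ X).hom) ∧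
  (∀ X : D,
    d.oplax X (𝟙_ D) ≫ (d.F.obj X ◁ d.oplax₀) ≫ (ρ_ (d.F.obj X)).hom = d.F.map (ρ_ X).hom)

/-- The two Frobenius compatibility conditions. -/
def FrobData.IsFrobenius (d : FrobData D C) : Prop :=
  (∀ X Y Z : D,
    (d.F.obj X ◁ d.oplax Y Z) ≫ (α_ (d.F.obj X) (d.F.obj Y) (d.F.obj Z)).inv ≫
        (d.lax X Y ▷ d.F.obj Z) =
      d.lax X (Y ⊗ Z) ≫ d.F.map (α_ X Y Z).inv ≫ d.oplax (X ⊗ Y) Z) ∧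
  (∀ X Y Z : D,
    (d.oplax X Y ▷ d.F.obj Z) ≫ (α_ (d.F.obj X) (d.F.obj Y) (d.F.obj Z)).hom ≫
        (d.F.obj X ◁ d.lax Y Z) =
      d.lax (X ⊗ Y) Z ≫ d.F.map (α_ X Y Z).hom ≫ d.oplax X (Y ⊗ Z))

attribute [local instance] CategoryTheory.endofunctorMonoidalCategory

universe w₁ w₂ s₁ s₂

variable {C' : Type s₁} [Category.{w₁} C'] {D' : Type s₂} [Category.{w₂} D']

/-- The functor `Φ = Hom(G, F) : End(D) ⥤ End(C)`, `X ↦ F ∘ X ∘ G`, equipped with the lax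
monoidal structure induced by the adjunction `G ⊣ F` and the oplax monoidal structure
induced by the adjunction `F ⊣ G`. -/
def PhiFrobData (G : C' ⥤ D') (F : D' ⥤ C')
    (adj₁ : F ⊣ G) (adj₂ : G ⊣ F) : FrobData (D' ⥤ D') (C' ⥤ C') where
  F :=
    { obj := fun X => G ⋙ X ⋙ F
      map := fun α => CategoryTheory.Functor.whiskerRight (CategoryTheory.Functor.whiskerLeft G α) F }
  lax X Y :=
    CategoryTheory.Functor.whiskerRight
      (CategoryTheory.Functor.whiskerLeft (G ⋙ X) (CategoryTheory.Functor.whiskerRight adj₂.counit Y)) F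
  lax₀ := adj₂.unit
  oplax X Y :=
    CategoryTheory.Functor.whiskerRight
      (CategoryTheory.Functor.whiskerLeft (G ⋙ X) (CategoryTheory.Functor.whiskerRight adj₁.unit Y)) F
  oplax₀ := adj₁.counit

/-- for an ambiadjunction `F ⊣ G ⊣ F`, the functor
`Φ : End(D) ⥤ End(C)`, `Φ(X) = F ∘ X ∘ G`, with lax structure
`lax₀ = η₂`, `lax_{X,Y} = F ∗ X ∗ ε₂ ∗ Y ∗ G` and oplax structure `oplax₀ = ε₁`,
`oplax_{X,Y} = F ∗ X ∗ η₁ ∗ Y ∗ G`, is a Frobenius monoidal functor between the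
endofunctor categories (monoidal under composition). -/
theorem Phi_of_ambiadjunction_frobenius_monoidal
    (G : C' ⥤ D') (F : D' ⥤ C') (adj₁ : F ⊣ G) (adj₂ : G ⊣ F) :
    (PhiFrobData G F adj₁ adj₂).IsLax ∧ (PhiFrobData G F adj₁ adj₂).IsOplax ∧
      (PhiFrobData G F adj₁ adj₂).IsFrobenius := by
  refine ⟨⟨?_, ?_, ?_, ?_⟩, ⟨?_, ?_, ?_, ?_⟩, ?_, ?_⟩ <;>
    intros <;> ext c <;>
    simp [PhiFrobData, endofunctorMonoidalCategory, ← Functor.map_comp]
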